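/- Let m ≥ 1 and let (Γ, τ) be a stable translation quiver. Then (Γ^m, τ^m) is a stable translation quiver: τ^m is a bijection on the vertices, and for all vertices x and y, the number of sectional paths of length m from x to y in Γ equals the number of sectional paths of length m from τ^m(y) to x in Γ. -/
import Mathlib


/-- A quiver (given by its arrow types `A x y`) is locally finite if each
vertex has only finitely many arrows between any pair of vertices and only
finitely many neighbours. -/
def QuiverLocFin {V : Type*} (A : V → V → Type*) : Prop :=
  (∀ x y, Finite (A x y)) ∧ (∀ x, {y | Nonempty (A x y)}.Finite) ∧
    (∀ y, {x | Nonempty (A x y)}.Finite)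

/-- A stable translation quiver: a locally finite quiver together with a
bijection `τ` on all vertices such that for all vertices `x, y` the number of
arrows from `x` to `y` equals the number of arrows from `τ y` to `x`. -/
def IsStableTranslationQuiver {V : Type*} (A : V → V → Type*) (τ : V → V) : Prop :=
  QuiverLocFin A ∧ Function.Bijective τ ∧
    ∀ x y, Nat.card (A x y) = Nat.card (A (τ y) x)

/-- The sectional condition on a sequence of vertices `v 0, v 1, …, v m`:
`τ (v (s+1)) ≠ v (s-1)` for all `0 < s < m`. -/
def SectCondT {V : Type*} (τ : V → V) (m : ℕ) (v : Fin (m+1) → V) : Prop :=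
  ∀ (s : ℕ) (_ : 1 ≤ s) (h2 : s + 1 ≤ m),
    τ (v ⟨s+1, by omega⟩) ≠ v ⟨s-1, by omega⟩

/-- The type of sectional paths of length `m` from `x` to `y`: a sequence of
vertices `v 0 = x, v 1, …, v m = y` satisfying the sectional condition,
together with a chosen arrow `v s → v (s+1)` for each `s`. -/
def SectPathT {V : Type*} (A : V → V → Type*) (τ : V → V) (m : ℕ)
    (x y : V) : Type _ :=
  Σ v : {v : Fin (m+1) → V // v 0 = x ∧ v (Fin.last m) = y ∧ SectCondT τ m v},
    ∀ s : Fin m, A (v.1 s.castSucc) (v.1 s.succ)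

namespace Stmt10Aux

variable {V : Type*} (A : V → V → Type*) (τ : V → V)

def ReachT : ℕ → V → V → Prop
  | 0, x, y => x = y
  | (n+1), x, y => ∃ z, Nonempty (A x z) ∧ ReachT n z y

lemma reach_fwd_finite (h2 : ∀ x, {y | Nonempty (A x y)}.Finite) :
    ∀ (n : ℕ) (x : V), {y | ReachT A n x y}.Finite := by
  intro n
  induction n with
  | zero => intro x; convert Set.finite_singleton x using 1
            ext y; simp [ReachT, eq_comm]
  | succ n ih =>
      intro x
      have : {y | ReachT A (n+1) x y} =
          ⋃ z ∈ {z | Nonempty (A x z)}, {y | ReachT A n z y} := by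
        ext y; simp [ReachT, Set.mem_iUnion]
      rw [this]
      exact Set.Finite.biUnion (h2 x) (fun z _ => ih z)

lemma reach_bwd_finite (h3 : ∀ y, {x | Nonempty (A x y)}.Finite) :
    ∀ (n : ℕ) (y : V), {x | ReachT A n x y}.Finite := by
  intro n
  induction n with
  | zero => intro y; exact Set.finite_singleton y
  | succ n ih =>
      intro y
      have : {x | ReachT A (n+1) x y} =
          ⋃ z ∈ {z | ReachT A n z y}, {x | Nonempty (A x z)} := by
        ext x; simp [ReachT, Set.mem_iUnion]; tauto
      rw [this]
      exact Set.Finite.biUnion (ih y) (fun z _ => h3 z)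

/-- from a path we get reachability between intermediate vertices -/
lemma path_reach {m : ℕ} (v : Fin (m+1) → V)
    (a : ∀ s : Fin m, A (v s.castSucc) (v s.succ)) :
    ∀ (n j : ℕ) (h : j + n ≤ m), ReachT A n (v ⟨j, by omega⟩) (v ⟨j + n, by omega⟩) := by
  intro n
  induction n with
  | zero => intro j h; simpa [ReachT] using rfl
  | succ n ih =>
      intro j h
      refine ⟨v ⟨j+1, by omega⟩, ⟨a ⟨j, by omega⟩⟩, ?_⟩
      have := ih (j+1) (by omega)
      have he : v ⟨j+1+n, by omega⟩ = v ⟨j+(n+1), by omega⟩ :=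
        congrArg v (Fin.ext (by simp only [Fin.val_mk]; omega))
      rwa [he] at this


lemma sectPath_finite (h1 : ∀ x y, Finite (A x y))
    (h2 : ∀ x, {y | Nonempty (A x y)}.Finite) (m : ℕ) (x y : V) :
    Finite (SectPathT A τ m x y) := by
  classical
  set S : Set V := ⋃ k ∈ Set.Iic m, {z | ReachT A k x z} with hS
  have hSfin : S.Finite :=
    Set.Finite.biUnion (Set.finite_Iic m) (fun k _ => reach_fwd_finite A h2 k x)
  haveI : Finite ↥S := hSfin.to_subtype
  haveI := h1
  -- membership of path vertices in S
  have hmem : ∀ (p : SectPathT A τ m x y) (k : Fin (m+1)), p.1.1 k ∈ S := by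
    intro p k
    have hr := path_reach A p.1.1 p.2 k.val 0 (by omega)
    have h0 : p.1.1 ⟨0, by omega⟩ = x := p.1.2.1
    rw [h0] at hr
    have he : p.1.1 ⟨0 + k.val, by omega⟩ = p.1.1 k :=
      congrArg p.1.1 (Fin.ext (by simp only [Fin.val_mk]; omega))
    rw [he] at hr
    exact Set.mem_biUnion (Set.mem_Iic.mpr (by omega)) hr
  let T := Σ u : Fin (m+1) → ↥S, ∀ s : Fin m, A (u s.castSucc).1 (u s.succ).1
  haveI : Finite T := inferInstance
  refine Finite.of_injective
    (fun p : SectPathT A τ m x y =>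
      (⟨fun k => ⟨p.1.1 k, hmem p k⟩, fun s => p.2 s⟩ : T)) ?_
  rintro ⟨⟨v, hv⟩, a⟩ ⟨⟨v', hv'⟩, a'⟩ hpq
  have h1' : v = v' := by
    funext k
    exact congrArg Subtype.val (congrFun (congrArg Sigma.fst hpq) k)
  subst h1'
  have h2' : a = a' := by
    have := (Sigma.ext_iff.mp hpq).2
    exact eq_of_heq this
  subst h2'
  rfl



section Equivs
variable (e : ∀ a b, A a b ≃ A (τ b) a)

def dEquiv (a b : V) : A a b ≃ A (τ a) (τ b) := (e a b).trans (e (τ b) a)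

def iterEquiv : ∀ (j : ℕ) (a b : V), A a b ≃ A (τ^[j] a) (τ^[j] b)
  | 0, _, _ => Equiv.refl _
  | (j+1), a, b => (dEquiv A τ e a b).trans (iterEquiv j (τ a) (τ b))

def revEquiv (j : ℕ) (a b : V) : A a b ≃ A (τ^[j+1] b) (τ^[j] a) :=
  ((iterEquiv A τ e j a b).trans (e (τ^[j] a) (τ^[j] b))).trans
    (Equiv.cast (congrArg (fun z => A z (τ^[j] a))
      (Function.iterate_succ_apply' τ j b).symm))

end Equivs

lemma iter_vert_congr {m : ℕ} (v : Fin (m+1) → V) {i j : ℕ}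
    (hi : i < m+1) (hj : j < m+1) (h : i = j) :
    τ^[i] (v ⟨i, hi⟩) = τ^[j] (v ⟨j, hj⟩) := by subst h; rfl

def revVert (m : ℕ) (v : Fin (m+1) → V) : Fin (m+1) → V :=
  fun k => τ^[m - k.val] (v ⟨m - k.val, Nat.lt_succ_of_le (Nat.sub_le m k.val)⟩)

section Rev
variable (e : ∀ a b, A a b ≃ A (τ b) a) (hτ : Function.Injective τ)

/-- the reversal map on sectional paths -/
noncomputable def revPath (m : ℕ) (x y : V) (p : SectPathT A τ m x y) :
    SectPathT A τ m (τ^[m] y) x :=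
  ⟨⟨revVert τ m p.1.1,
    -- w 0 = τ^[m] y
    (by
      show τ^[m - 0] (p.1.1 ⟨m - 0, _⟩) = τ^[m] y
      rw [show (⟨m - 0, Nat.lt_succ_of_le (Nat.sub_le m 0)⟩ : Fin (m+1)) = Fin.last m from
        Fin.ext (by simp [Fin.last])]
      rw [p.1.2.2.1]; simp),
    -- w last = x
    (by
      show τ^[m - m] (p.1.1 ⟨m - m, _⟩) = x
      have := iter_vert_congr τ p.1.1 (i := m - m) (j := 0)
        (Nat.lt_succ_of_le (Nat.sub_le m m)) (by omega) (by omega)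
      rw [this]
      exact p.1.2.1),
    -- sectional condition
    (by
      intro s hs1 hs2
      show τ (τ^[m - (s+1)] (p.1.1 ⟨m - (s+1), _⟩)) ≠ τ^[m - (s-1)] (p.1.1 ⟨m - (s-1), _⟩)
      rw [← Function.iterate_succ_apply' τ (m - (s+1)) _]
      have l1 : τ^[m - (s+1) + 1] (p.1.1 ⟨m - (s+1), Nat.lt_succ_of_le (Nat.sub_le _ _)⟩)
          = τ^[m - s] (p.1.1 ⟨m - s - 1, by omega⟩) := by
        exact congrArg₂ (fun (n : ℕ) (z : V) => τ^[n] z) (by omega)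
          (congrArg p.1.1 (Fin.ext (by simp only [Fin.val_mk]; omega)))
      have l2 : τ^[m - (s-1)] (p.1.1 ⟨m - (s-1), Nat.lt_succ_of_le (Nat.sub_le _ _)⟩)
          = τ^[(m - s) + 1] (p.1.1 ⟨m - s + 1, by omega⟩) := by
        exact congrArg₂ (fun (n : ℕ) (z : V) => τ^[n] z) (by omega)
          (congrArg p.1.1 (Fin.ext (by simp only [Fin.val_mk]; omega)))
      rw [l1, l2]
      show τ^[m - s] _ ≠ τ^[m - s] (τ (p.1.1 ⟨m - s + 1, _⟩))
      intro heq
      have h3 := hτ.iterate (m - s) heq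
      have h4 := p.1.2.2.2 (m - s) (by omega) (by omega)
      apply h4
      have i1 : p.1.1 ⟨m - s + 1, by omega⟩ = p.1.1 ⟨(m - s) + 1, by omega⟩ := rfl
      have i2 : p.1.1 ⟨m - s - 1, by omega⟩ = p.1.1 ⟨(m - s) - 1, by omega⟩ := rfl
      rw [← i1, ← i2]
      exact h3.symm)⟩,
   fun s => cast
     (congrArg (fun z => A z (τ^[m - (s.val+1)]
        (p.1.1 ⟨m - (s.val+1), Nat.lt_succ_of_le (Nat.sub_le _ _)⟩)))
       (iter_vert_congr τ p.1.1 (i := (m - s.val - 1) + 1) (j := m - s.val)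
         (by have := s.isLt; omega) (Nat.lt_succ_of_le (Nat.sub_le _ _))
         (by have := s.isLt; omega)))
     (revEquiv A τ e (m - s.val - 1) _ _ (p.2 ⟨m - s.val - 1, by have := s.isLt; omega⟩))⟩

lemma revVert_inj (hτ' : Function.Injective τ) {m : ℕ} {v v' : Fin (m+1) → V}
    (h : revVert τ m v = revVert τ m v') : v = v' := by
  funext k
  have E := congrFun h ⟨m - k.val, Nat.lt_succ_of_le (Nat.sub_le _ _)⟩
  have hk : m - (m - k.val) = k.val := by have := k.isLt; omega
  have l1 := iter_vert_congr τ v (i := m - (m - k.val)) (j := k.val)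
    (Nat.lt_succ_of_le (Nat.sub_le _ _)) k.isLt hk
  have l2 := iter_vert_congr τ v' (i := m - (m - k.val)) (j := k.val)
    (Nat.lt_succ_of_le (Nat.sub_le _ _)) k.isLt hk
  have E1 : τ^[k.val] (v k) = τ^[k.val] (v' k) := l1.symm.trans (E.trans l2)
  exact hτ'.iterate k.val E1

lemma revPath_injective (m : ℕ) (x y : V) :
    Function.Injective (revPath A τ e hτ m x y) := by
  rintro ⟨⟨v, hv⟩, a⟩ ⟨⟨v', hv'⟩, a'⟩ h
  have hw : revVert τ m v = revVert τ m v' := by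
    funext k
    exact congrFun (congrArg Subtype.val (congrArg Sigma.fst h)) k
  have hvv : v = v' := revVert_inj τ hτ hw
  subst hvv
  have ha : a = a' := by
    have h2 := eq_of_heq (Sigma.ext_iff.mp h).2
    funext t
    have h3 := congrFun h2 ⟨m - 1 - t.val, by have := t.isLt; omega⟩
    simp only [revPath] at h3
    have h4 := (cast_inj _).mp h3
    have h5 := (revEquiv A τ e _ _ _).injective h4
    have i1 : (⟨m - (m - 1 - t.val) - 1, by have := t.isLt; omega⟩ : Fin m) = t :=
      Fin.ext (by simp only [Fin.val_mk]; have := t.isLt; omega)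
    exact Eq.ndrec (motive := fun w => a w = a' w) h5 i1
  subst ha
  rfl

end Rev

section Back
variable (e : ∀ a b, A a b ≃ A (τ b) a) (hbij : Function.Bijective τ)

/-- shift a path backwards by `τ⁻¹` -/
noncomputable def backPath (m : ℕ) (a b : V) (p : SectPathT A τ m a b) :
    SectPathT A τ m ((Equiv.ofBijective τ hbij).symm a)
      ((Equiv.ofBijective τ hbij).symm b) := by
  set σ := Equiv.ofBijective τ hbij with hσ
  exact ⟨⟨fun k => σ.symm (p.1.1 k),
    congrArg σ.symm p.1.2.1,
    congrArg σ.symm p.1.2.2.1,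
    (by
      intro s hs1 hs2
      show τ (σ.symm (p.1.1 ⟨s+1, _⟩)) ≠ σ.symm (p.1.1 ⟨s-1, _⟩)
      have h1 : τ (σ.symm (p.1.1 ⟨s+1, by omega⟩)) = p.1.1 ⟨s+1, by omega⟩ :=
        σ.apply_symm_apply _
      rw [h1]
      intro heq
      have h2 : τ (p.1.1 ⟨s+1, by omega⟩) = p.1.1 ⟨s-1, by omega⟩ := by
        have := congrArg σ heq
        rwa [σ.apply_symm_apply] at this
      exact p.1.2.2.2 s hs1 hs2 h2)⟩,
   fun s => ((dEquiv A τ e (σ.symm (p.1.1 s.castSucc)) (σ.symm (p.1.1 s.succ))).trans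
     (Equiv.cast (congrArg₂ A (σ.apply_symm_apply _) (σ.apply_symm_apply _)))).symm
     (p.2 s)⟩

lemma backPath_injective (m : ℕ) (a b : V) :
    Function.Injective (backPath A τ e hbij m a b) := by
  rintro ⟨⟨v, hv⟩, c⟩ ⟨⟨v', hv'⟩, c'⟩ h
  set σ := Equiv.ofBijective τ hbij with hσ
  have hvv : v = v' := by
    funext k
    have := congrFun (congrArg Subtype.val (congrArg Sigma.fst h)) k
    exact σ.symm.injective this
  subst hvv
  have hc : c = c' := by
    have h2 := eq_of_heq (Sigma.ext_iff.mp h).2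
    funext s
    have h3 := congrFun h2 s
    simp only [backPath] at h3
    exact (Equiv.injective _) h3
  subst hc
  rfl

end Back

lemma card_iter_le (e : ∀ a b, A a b ≃ A (τ b) a) (hbij : Function.Bijective τ)
    (h1 : ∀ x y, Finite (A x y))
    (h2 : ∀ x, {y | Nonempty (A x y)}.Finite) (m : ℕ) :
    ∀ (n : ℕ) (x y : V),
      Nat.card (SectPathT A τ m (τ^[n] x) (τ^[n] y)) ≤ Nat.card (SectPathT A τ m x y) := by
  intro n
  induction n with
  | zero => intro x y; exact le_refl _
  | succ n ih =>
      intro x y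
      set σ := Equiv.ofBijective τ hbij with hσ
      haveI := sectPath_finite A τ h1 h2 m (σ.symm (τ^[n+1] x)) (σ.symm (τ^[n+1] y))
      have step := Nat.card_le_card_of_injective _ (backPath_injective A τ e hbij m (τ^[n+1] x) (τ^[n+1] y))
      have e1 : σ.symm (τ^[n+1] x) = τ^[n] x := by
        rw [Function.iterate_succ_apply']; exact σ.symm_apply_apply _
      have e2 : σ.symm (τ^[n+1] y) = τ^[n] y := by
        rw [Function.iterate_succ_apply']; exact σ.symm_apply_apply _
      rw [e1, e2] at step
      exact step.trans (ih x y)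

end Stmt10Aux

open Stmt10Aux in
/-- Let `m ≥ 1` and let `(Γ,τ)` be a stable translation quiver.  Then
`(Γ^m, τ^m)` — whose arrows from `x` to `y` are the sectional paths of length
`m` from `x` to `y` in `Γ`, and whose translation is the `m`-th iterate
`τ^[m]` — is again a stable translation quiver: `τ^[m]` is a bijection on the
vertices, and for all vertices `x, y` the number of sectional paths of length
`m` from `x` to `y` equals the number of sectional paths of length `m` from
`τ^[m] y` to `x`. -/
theorem stmt10 {V : Type*} (A : V → V → Type*) (τ : V → V)
    (hST : IsStableTranslationQuiver A τ) (m : ℕ) (hm : 1 ≤ m) :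
    IsStableTranslationQuiver (fun x y => SectPathT A τ m x y) (τ^[m]) := by
  obtain ⟨⟨h1, h2, h3⟩, hbij, hcard⟩ := hST
  have hτinj : Function.Injective τ := hbij.injective
  have e : ∀ a b, A a b ≃ A (τ b) a := fun a b => by
    haveI := h1 a b; haveI := h1 (τ b) a
    exact (Finite.card_eq.mp (hcard a b)).some
  have hreach : ∀ (x y : V), Nonempty (SectPathT A τ m x y) → ReachT A m x y := by
    rintro x y ⟨p⟩
    have hr := path_reach A p.1.1 p.2 m 0 (by omega)
    have e1 : p.1.1 ⟨0, by omega⟩ = x := p.1.2.1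
    have e2 : p.1.1 ⟨0 + m, by omega⟩ = y := by
      have hfin : (⟨0 + m, by omega⟩ : Fin (m+1)) = Fin.last m :=
        Fin.ext (by simp [Fin.last])
      rw [hfin]; exact p.1.2.2.1
    rwa [e1, e2] at hr
  refine ⟨⟨fun x y => sectPath_finite A τ h1 h2 m x y, ?_, ?_⟩,
    Function.Bijective.iterate hbij m, ?_⟩
  · intro x
    exact Set.Finite.subset (reach_fwd_finite A h2 m x) (fun y hy => hreach x y hy)
  · intro y
    exact Set.Finite.subset (reach_bwd_finite A h3 m y) (fun x hx => hreach x y hx)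
  · intro x y
    haveI := sectPath_finite A τ h1 h2 m (τ^[m] y) x
    haveI := sectPath_finite A τ h1 h2 m (τ^[m] x) (τ^[m] y)
    have key1 : Nat.card (SectPathT A τ m x y) ≤ Nat.card (SectPathT A τ m (τ^[m] y) x) :=
      Nat.card_le_card_of_injective _ (revPath_injective A τ e hτinj m x y)
    have key2 : Nat.card (SectPathT A τ m (τ^[m] y) x)
        ≤ Nat.card (SectPathT A τ m (τ^[m] x) (τ^[m] y)) :=
      Nat.card_le_card_of_injective _ (revPath_injective A τ e hτinj m (τ^[m] y) x)
    have key3 : Nat.card (SectPathT A τ m (τ^[m] x) (τ^[m] y))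
        ≤ Nat.card (SectPathT A τ m x y) :=
      card_iter_le A τ e hbij h1 h2 m m x y
    show Nat.card (SectPathT A τ m x y) = Nat.card (SectPathT A τ m (τ^[m] y) x)
    omega
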